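/- Let 0 < s ≤ k ≤ n be positive integers and L = {ℓ₁ < ℓ₂ < … < ℓ_s} a set of s positive integers. Suppose n ≥ C(k², ℓ₁+1)·s + ℓ₁. Let ℱ be an L-intersecting, k-uniform family of subsets of [n] such that ⋂_{F∈ℱ} F = ∅. Then |ℱ| ≤ C(n−ℓ₁, s). -/

import Mathlib

open Finset
section Aux
variable {α : Type*} [DecidableEq α] [Fintype α]

noncomputable def auxXT (𝒢 : Finset (Finset α)) (T : Finset α) : ↥𝒢 → ℚ :=
  fun G => if T ⊆ (G : Finset α) then 1 else 0

theorem aux_mul_mem (𝒢 : Finset (Finset α)) (F : Finset α) (a : ℚ) (c : ℕ) (g : ↥𝒢 → ℚ)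
    (hg : g ∈ Submodule.span ℚ (auxXT 𝒢 '' {T : Finset α | T ⊆ F ∧ T.card ≤ c})) :
    (fun G : ↥𝒢 => ((((G : Finset α) ∩ F).card : ℚ) - a) * g G) ∈
      Submodule.span ℚ (auxXT 𝒢 '' {T : Finset α | T ⊆ F ∧ T.card ≤ c + 1}) := by
  classical
  induction hg using Submodule.span_induction with
  | mem x hx =>
    obtain ⟨T, ⟨hTF, hTc⟩, rfl⟩ := hx
    have key : (fun G : ↥𝒢 => ((((G : Finset α) ∩ F).card : ℚ) - a) * auxXT 𝒢 T G)
        = (∑ i ∈ F \ T, auxXT 𝒢 (insert i T)) + ((T.card : ℚ) - a) • auxXT 𝒢 T := by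
      funext G
      simp only [auxXT, Finset.sum_apply, Pi.add_apply, Pi.smul_apply, smul_eq_mul]
      by_cases hTG : T ⊆ (G : Finset α)
      · rw [if_pos hTG]
        have h1 : ∀ i ∈ F \ T, (if insert i T ⊆ (G : Finset α) then (1:ℚ) else 0)
            = if i ∈ (G : Finset α) then 1 else 0 := by
          intro i hi; simp [Finset.insert_subset_iff, hTG]
        rw [Finset.sum_congr rfl h1, Finset.sum_boole]
        have h2 : (F \ T).filter (· ∈ (G : Finset α)) = ((G : Finset α) ∩ F) \ T := by
          ext x
          simp only [Finset.mem_filter, Finset.mem_sdiff, Finset.mem_inter]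
          tauto
        have hTsub : T ⊆ (G : Finset α) ∩ F := Finset.subset_inter hTG hTF
        have hle : T.card ≤ ((G : Finset α) ∩ F).card := Finset.card_le_card hTsub
        rw [h2, Finset.card_sdiff_of_subset hTsub, Nat.cast_sub hle]
        ring
      · rw [if_neg hTG]
        have h1 : ∀ i ∈ F \ T, (if insert i T ⊆ (G : Finset α) then (1:ℚ) else 0) = 0 := by
          intro i hi
          rw [if_neg]
          intro hsub
          exact hTG ((Finset.subset_insert i T).trans hsub)
        rw [Finset.sum_congr rfl h1]
        simp
    rw [key]
    refine Submodule.add_mem _ (Submodule.sum_mem _ ?_) (Submodule.smul_mem _ _ ?_)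
    · intro i hi
      obtain ⟨hiF, hiT⟩ := Finset.mem_sdiff.1 hi
      refine Submodule.subset_span ⟨insert i T, ⟨Finset.insert_subset hiF hTF, ?_⟩, rfl⟩
      rw [Finset.card_insert_of_notMem hiT]; omega
    · exact Submodule.subset_span ⟨T, ⟨hTF, by omega⟩, rfl⟩
  | zero =>
    have : (fun G : ↥𝒢 => ((((G : Finset α) ∩ F).card : ℚ) - a) * (0 : ↥𝒢 → ℚ) G) = 0 := by
      funext G; simp
    rw [this]; exact Submodule.zero_mem _
  | add x y hx hy ihx ihy =>
    have : (fun G : ↥𝒢 => ((((G : Finset α) ∩ F).card : ℚ) - a) * (x + y) G)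
        = (fun G : ↥𝒢 => ((((G : Finset α) ∩ F).card : ℚ) - a) * x G)
          + fun G : ↥𝒢 => ((((G : Finset α) ∩ F).card : ℚ) - a) * y G := by
      funext G; simp [mul_add]
    rw [this]; exact Submodule.add_mem _ ihx ihy
  | smul r x hx ih =>
    have : (fun G : ↥𝒢 => ((((G : Finset α) ∩ F).card : ℚ) - a) * (r • x) G)
        = r • fun G : ↥𝒢 => ((((G : Finset α) ∩ F).card : ℚ) - a) * x G := by
      funext G; simp [smul_eq_mul]; ring
    rw [this]; exact Submodule.smul_mem _ _ ih

theorem aux_prod_mem (𝒢 : Finset (Finset α)) (F : Finset α) (M' : Finset ℕ) :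
    (fun G : ↥𝒢 => ∏ m ∈ M', ((((G : Finset α) ∩ F).card : ℚ) - m)) ∈
      Submodule.span ℚ (auxXT 𝒢 '' {T : Finset α | T ⊆ F ∧ T.card ≤ M'.card}) := by
  classical
  induction M' using Finset.induction with
  | empty =>
    have : (fun G : ↥𝒢 => ∏ m ∈ (∅ : Finset ℕ), ((((G : Finset α) ∩ F).card : ℚ) - m))
        = auxXT 𝒢 ∅ := by
      funext G; simp [auxXT]
    rw [this]
    exact Submodule.subset_span ⟨∅, ⟨Finset.empty_subset F, by simp⟩, rfl⟩
  | insert a M' ha ih =>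
    have : (fun G : ↥𝒢 => ∏ m ∈ insert a M', ((((G : Finset α) ∩ F).card : ℚ) - m))
        = fun G : ↥𝒢 => ((((G : Finset α) ∩ F).card : ℚ) - a)
            * ∏ m ∈ M', ((((G : Finset α) ∩ F).card : ℚ) - m) := by
      funext G; rw [Finset.prod_insert ha]
    rw [this, Finset.card_insert_of_notMem ha]
    exact aux_mul_mem 𝒢 F a M'.card _ ih


theorem aux_card_le_choose (S : Finset α) (𝒢 : Finset (Finset α)) (k : ℕ)
    (hsub : ∀ G ∈ 𝒢, G ⊆ S) (hcard : ∀ G ∈ 𝒢, G.card = k)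
    (M : Finset ℕ) (hM : ∀ E ∈ 𝒢, ∀ F ∈ 𝒢, E ≠ F → (E ∩ F).card ∈ M)
    (hMlt : ∀ m ∈ M, m < k) :
    𝒢.card ≤ S.card.choose M.card := by
  classical
  have hdk : M.card ≤ k := by
    calc M.card ≤ (Finset.range k).card :=
          Finset.card_le_card (fun m hm => Finset.mem_range.2 (hMlt m hm))
      _ = k := Finset.card_range k
  set gens : Finset (↥𝒢 → ℚ) := (S.powersetCard M.card).image (auxXT 𝒢) with hgens
  set V₀ : Submodule ℚ (↥𝒢 → ℚ) := Submodule.span ℚ (gens : Set (↥𝒢 → ℚ)) with hV₀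
  have hgen : ∀ T : Finset α, T ⊆ S → T.card = M.card → auxXT 𝒢 T ∈ V₀ := by
    intro T hTS hTc
    exact Submodule.subset_span
      (Finset.mem_coe.2 (Finset.mem_image.2 ⟨T, Finset.mem_powersetCard.2 ⟨hTS, hTc⟩, rfl⟩))
  -- raising identity
  have hstep : ∀ T : Finset α, T ⊆ S → T.card < k →
      auxXT 𝒢 T = ((k : ℚ) - T.card)⁻¹ • ∑ i ∈ S \ T, auxXT 𝒢 (insert i T) := by
    intro T hTS hTk
    funext G
    simp only [auxXT, Pi.smul_apply, Finset.sum_apply, smul_eq_mul]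
    by_cases hTG : T ⊆ (G : Finset α)
    · rw [if_pos hTG]
      have h1 : ∀ i ∈ S \ T, (if insert i T ⊆ (G : Finset α) then (1:ℚ) else 0)
          = if i ∈ (G : Finset α) then 1 else 0 := by
        intro i hi; simp [Finset.insert_subset_iff, hTG]
      rw [Finset.sum_congr rfl h1, Finset.sum_boole]
      have h2 : (S \ T).filter (· ∈ (G : Finset α)) = (G : Finset α) \ T := by
        ext x
        simp only [Finset.mem_filter, Finset.mem_sdiff]
        constructor
        · rintro ⟨⟨_, hxT⟩, hxG⟩; exact ⟨hxG, hxT⟩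
        · rintro ⟨hxG, hxT⟩; exact ⟨⟨hsub G G.2 hxG, hxT⟩, hxG⟩
      have hTG' : T.card ≤ (G : Finset α).card := Finset.card_le_card hTG
      rw [h2, Finset.card_sdiff_of_subset hTG, hcard G G.2]
      rw [hcard G G.2] at hTG'
      rw [Nat.cast_sub hTG']
      have hne : (k : ℚ) - T.card ≠ 0 := by
        have hc : (T.card : ℚ) < k := by exact_mod_cast hTk
        intro h; rw [sub_eq_zero] at h; exact absurd h.symm (ne_of_lt hc)
      exact (inv_mul_cancel₀ hne).symm
    · rw [if_neg hTG]
      have h1 : ∀ i ∈ S \ T, (if insert i T ⊆ (G : Finset α) then (1:ℚ) else 0) = 0 := by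
        intro i hi
        rw [if_neg]
        intro hsub'
        exact hTG ((Finset.subset_insert i T).trans hsub')
      rw [Finset.sum_congr rfl h1]
      simp
  have hA : ∀ (j : ℕ) (T : Finset α), T ⊆ S → T.card + j = M.card → auxXT 𝒢 T ∈ V₀ := by
    intro j
    induction j with
    | zero => intro T hTS hTc; exact hgen T hTS (by omega)
    | succ j ih =>
      intro T hTS hTc
      have hTk : T.card < k := by omega
      rw [hstep T hTS hTk]
      refine Submodule.smul_mem _ _ (Submodule.sum_mem _ ?_)
      intro i hi
      obtain ⟨hiS, hiT⟩ := Finset.mem_sdiff.1 hi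
      exact ih (insert i T) (Finset.insert_subset hiS hTS)
        (by rw [Finset.card_insert_of_notMem hiT]; omega)
  have hAle : ∀ T : Finset α, T ⊆ S → T.card ≤ M.card → auxXT 𝒢 T ∈ V₀ :=
    fun T hTS hTc => hA (M.card - T.card) T hTS (by omega)
  -- the polynomials
  set fam : ↥𝒢 → (↥𝒢 → ℚ) := fun F => fun G =>
    ∏ m ∈ M, ((((G : Finset α) ∩ (F : Finset α)).card : ℚ) - m) with hfam
  have hfammem : ∀ F : ↥𝒢, fam F ∈ V₀ := by
    intro F
    have h1 := aux_prod_mem 𝒢 (F : Finset α) M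
    refine Submodule.span_le.2 ?_ h1
    rintro x ⟨T, ⟨hTF, hTc⟩, rfl⟩
    exact hAle T (hTF.trans (hsub F F.2)) hTc
  have hdiag : ∀ F : ↥𝒢, fam F F ≠ 0 := by
    intro F
    have : ((F : Finset α) ∩ (F : Finset α)) = (F : Finset α) := Finset.inter_self _
    rw [hfam]
    simp only [this, hcard F F.2]
    refine Finset.prod_ne_zero_iff.2 ?_
    intro m hm
    have := hMlt m hm
    have h1 : (m : ℚ) < k := by exact_mod_cast this
    intro h; rw [sub_eq_zero] at h; exact absurd h.symm (ne_of_lt h1)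
  have hoff : ∀ F G : ↥𝒢, F ≠ G → fam F G = 0 := by
    intro F G hFG
    have hne : (G : Finset α) ≠ (F : Finset α) := by
      intro h; exact hFG (Subtype.ext h.symm)
    have hm : ((G : Finset α) ∩ (F : Finset α)).card ∈ M := hM _ G.2 _ F.2 hne
    exact Finset.prod_eq_zero hm (by simp)
  have hli : LinearIndependent ℚ fam := by
    rw [Fintype.linearIndependent_iff]
    intro g hg i
    have := congrFun hg i
    simp only [Finset.sum_apply, Pi.zero_apply] at this
    rw [Finset.sum_eq_single i (fun j _ hj => by
        simp only [Pi.smul_apply, smul_eq_mul, hoff j i hj, mul_zero])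
      (fun h => absurd (Finset.mem_univ i) h)] at this
    simp only [Pi.smul_apply, smul_eq_mul] at this
    exact (mul_eq_zero.1 this).resolve_right (hdiag i)
  -- conclusion
  haveI : Module.Finite ℚ V₀ := by
    apply FiniteDimensional.span_of_finite
    exact gens.finite_toSet
  set fam' : ↥𝒢 → ↥V₀ := fun F => ⟨fam F, hfammem F⟩ with hfam'
  have hli' : LinearIndependent ℚ fam' := by
    apply LinearIndependent.of_comp V₀.subtype
    exact hli
  have h1 : Fintype.card ↥𝒢 ≤ Module.finrank ℚ V₀ := hli'.fintype_card_le_finrank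
  have h2 : Module.finrank ℚ V₀ ≤ gens.card := finrank_span_finset_le_card gens
  have h3 : gens.card ≤ (S.powersetCard M.card).card := Finset.card_image_le
  rw [Finset.card_powersetCard] at h3
  calc 𝒢.card = Fintype.card ↥𝒢 := (Fintype.card_coe 𝒢).symm
    _ ≤ _ := h1
    _ ≤ _ := h2
    _ ≤ _ := h3
-- appended part
theorem aux_choose_mono_left (N a : ℕ) : ∀ b, a ≤ b → 2 * b ≤ N → N.choose a ≤ N.choose b := by
  intro b
  induction b with
  | zero => intro h1 _; rw [Nat.le_zero.1 h1]
  | succ b ih =>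
    intro h1 h2
    rcases Nat.lt_or_ge a (b + 1) with h | h
    · refine (ih (by omega) (by omega)).trans (Nat.choose_le_succ_of_lt_half_left ?_)
      have h3 := (Nat.le_div_iff_mul_le (by norm_num : 0 < 2)).2 (by omega : (b + 1) * 2 ≤ N)
      omega
    · have : a = b + 1 := by omega
      rw [this]

theorem stmt_3 (n k s ℓ₁ : ℕ) (hs : 0 < s) (hsk : s ≤ k) (hkn : k ≤ n)
    (L : Finset ℕ) (hLcard : L.card = s) (hLpos : ∀ ℓ ∈ L, 0 < ℓ)
    (hℓ₁ : ℓ₁ ∈ L) (hmin : ∀ ℓ ∈ L, ℓ₁ ≤ ℓ)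
    (hn : (k ^ 2).choose (ℓ₁ + 1) * s + ℓ₁ ≤ n)
    (ℱ : Finset (Finset (Fin n)))
    (huniform : ∀ F ∈ ℱ, F.card = k)
    (hL : ∀ E ∈ ℱ, ∀ F ∈ ℱ, E ≠ F → (E ∩ F).card ∈ L)
    (hempty : ℱ.inf id = ∅) :
    ℱ.card ≤ (n - ℓ₁).choose s := by
  classical
  have hkpos : 0 < k := lt_of_lt_of_le hs hsk
  have hn0 : 0 < n := lt_of_lt_of_le hkpos hkn
  have hl1 : 0 < ℓ₁ := hLpos ℓ₁ hℓ₁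
  -- ℱ is nonempty
  have hFne : ℱ.Nonempty := by
    rw [Finset.nonempty_iff_ne_empty]
    intro h
    rw [h, Finset.inf_empty] at hempty
    rw [Finset.top_eq_univ] at hempty
    have hcard := congrArg Finset.card hempty
    rw [Finset.card_univ, Fintype.card_fin, Finset.card_empty] at hcard
    omega
  obtain ⟨F₁, hF₁⟩ := hFne
  have hex : ∀ a : Fin n, ∃ G, G ∈ ℱ ∧ a ∉ G := by
    intro a
    by_contra h
    push_neg at h
    have h2 : ({a} : Finset (Fin n)) ≤ ℱ.inf id :=
      Finset.le_inf (fun G hG => Finset.singleton_subset_iff.2 (h G hG))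
    rw [hempty] at h2
    exact absurd (h2 (Finset.mem_singleton_self a)) (Finset.notMem_empty a)
  choose G hGmem hGnot using hex
  -- ℓ₁ < k
  have hF₁card : F₁.card = k := huniform F₁ hF₁
  obtain ⟨a₀, ha₀⟩ := Finset.card_pos.1 (by rw [hF₁card]; exact hkpos)
  have hlk : ℓ₁ < k := by
    have hne : G a₀ ≠ F₁ := fun h => hGnot a₀ (h ▸ ha₀)
    have hL₀ : (G a₀ ∩ F₁).card ∈ L := hL _ (hGmem a₀) F₁ hF₁ hne
    have h1 : ℓ₁ ≤ (G a₀ ∩ F₁).card := hmin _ hL₀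
    have hsub : G a₀ ∩ F₁ ⊆ F₁.erase a₀ := by
      intro x hx
      obtain ⟨hx1, hx2⟩ := Finset.mem_inter.1 hx
      exact Finset.mem_erase.2 ⟨fun hxa => hGnot a₀ (hxa ▸ hx1), hx2⟩
    have h2 : (G a₀ ∩ F₁).card ≤ k - 1 := by
      have := Finset.card_le_card hsub
      rwa [Finset.card_erase_of_mem ha₀, hF₁card] at this
    omega
  -- the small "witness" set W
  set W : Finset (Fin n) := F₁ ∪ F₁.biUnion (fun a => G a \ F₁) with hW
  have hWcard : W.card ≤ k ^ 2 := by
    have h1 : W.card ≤ F₁.card + (F₁.biUnion (fun a => G a \ F₁)).card :=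
      Finset.card_union_le _ _
    have h2 : (F₁.biUnion (fun a => G a \ F₁)).card ≤ ∑ a ∈ F₁, (G a \ F₁).card :=
      Finset.card_biUnion_le
    have h3 : ∀ a ∈ F₁, (G a \ F₁).card ≤ k - 1 := by
      intro a ha
      have hne : G a ≠ F₁ := fun h => hGnot a (h ▸ ha)
      have hl : ℓ₁ ≤ (G a ∩ F₁).card := hmin _ (hL _ (hGmem a) F₁ hF₁ hne)
      have := Finset.card_inter_add_card_sdiff (G a) F₁
      have hGa : (G a).card = k := huniform _ (hGmem a)
      omega
    have h4 : ∑ a ∈ F₁, (G a \ F₁).card ≤ k * (k - 1) := by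
      calc ∑ a ∈ F₁, (G a \ F₁).card ≤ ∑ _a ∈ F₁, (k - 1) := Finset.sum_le_sum h3
        _ = k * (k - 1) := by rw [Finset.sum_const, hF₁card, smul_eq_mul]
    have : k + k * (k - 1) = k ^ 2 := by
      obtain ⟨m, rfl⟩ : ∃ m, k = m + 1 := ⟨k - 1, by omega⟩
      rw [Nat.add_sub_cancel]
      ring
    omega
  have hF₁W : F₁ ⊆ W := Finset.subset_union_left
  have hGW : ∀ a ∈ F₁, G a ⊆ W := by
    intro a ha x hx
    by_cases hxF : x ∈ F₁
    · exact Finset.mem_union_left _ hxF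
    · exact Finset.mem_union_right _
        (Finset.mem_biUnion.2 ⟨a, ha, Finset.mem_sdiff.2 ⟨hx, hxF⟩⟩)
  -- every member meets W in at least ℓ₁ + 1 points
  have hclaim : ∀ F ∈ ℱ, ℓ₁ + 1 ≤ (F ∩ W).card := by
    intro F hF
    by_cases hFF₁ : F = F₁
    · rw [hFF₁, Finset.inter_eq_left.2 hF₁W, hF₁card]; omega
    by_cases hFG : ∃ a ∈ F₁, F = G a
    · obtain ⟨a, ha, hFa⟩ := hFG
      rw [hFa, Finset.inter_eq_left.2 (hGW a ha), huniform _ (hGmem a)]; omega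
    push_neg at hFG
    by_contra hcon
    push_neg at hcon
    have hcW : (F ∩ W).card ≤ ℓ₁ := by omega
    have hint : ℓ₁ ≤ (F ∩ F₁).card := hmin _ (hL F hF F₁ hF₁ hFF₁)
    have hsub1 : F ∩ F₁ ⊆ F ∩ W := Finset.inter_subset_inter (Finset.Subset.refl F) hF₁W
    have heq : F ∩ F₁ = F ∩ W :=
      Finset.eq_of_subset_of_card_le hsub1 (le_trans hcW hint)
    obtain ⟨a, ha⟩ := Finset.card_pos.1 (lt_of_lt_of_le hl1 hint)
    obtain ⟨haF, haF₁⟩ := Finset.mem_inter.1 ha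
    have hFGa : F ≠ G a := hFG a haF₁
    have hint2 : ℓ₁ ≤ (F ∩ G a).card := hmin _ (hL F hF (G a) (hGmem a) hFGa)
    have hsub2 : F ∩ G a ⊆ F ∩ W :=
      Finset.inter_subset_inter (Finset.Subset.refl F) (hGW a haF₁)
    have heq2 : F ∩ G a = F ∩ W :=
      Finset.eq_of_subset_of_card_le hsub2 (le_trans hcW hint2)
    have : a ∈ F ∩ G a := by rw [heq2, ← heq]; exact ha
    exact hGnot a (Finset.mem_inter.1 this).2
  -- now compare choose with lower indices; need 2 * (s-1) ≤ n - ℓ₁ - 1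
  have hchoose2 : 2 ≤ (k ^ 2).choose (ℓ₁ + 1) := by
    have hk2 : 2 ≤ k := by omega
    have hkk : 2 * k ≤ k ^ 2 := by rw [pow_two]; exact Nat.mul_le_mul_right k hk2
    have h1 : ℓ₁ + 1 ≤ k ^ 2 - 1 := by omega
    have h2 : k ^ 2 = (k ^ 2 - 1) + 1 := by omega
    rw [h2, Nat.choose_succ_succ]
    simp only [Nat.succ_eq_add_one]
    have p1 : 0 < (k ^ 2 - 1).choose ℓ₁ := Nat.choose_pos (by omega)
    have p2 : 0 < (k ^ 2 - 1).choose (ℓ₁ + 1) := Nat.choose_pos h1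
    omega
  have hns : 2 * s + ℓ₁ ≤ n := by
    have h5 : 2 * s ≤ (k ^ 2).choose (ℓ₁ + 1) * s := Nat.mul_le_mul_right s hchoose2
    omega
  -- covering ℱ by the sets containing a fixed (ℓ₁+1)-subset of W
  have hcover : ℱ ⊆ (W.powersetCard (ℓ₁ + 1)).biUnion
      (fun B => ℱ.filter (fun F => B ⊆ F)) := by
    intro F hF
    obtain ⟨B, hB1, hB2⟩ := Finset.exists_subset_card_eq (hclaim F hF)
    refine Finset.mem_biUnion.2 ⟨B, ?_, ?_⟩
    · exact Finset.mem_powersetCard.2 ⟨hB1.trans Finset.inter_subset_right, hB2⟩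
    · exact Finset.mem_filter.2 ⟨hF, hB1.trans Finset.inter_subset_left⟩
  -- each block is small, via the linear algebra bound
  have hblock : ∀ B ∈ W.powersetCard (ℓ₁ + 1),
      (ℱ.filter (fun F => B ⊆ F)).card ≤ (n - ℓ₁ - 1).choose (s - 1) := by
    intro B hB
    obtain ⟨hBW, hBcard⟩ := Finset.mem_powersetCard.1 hB
    set 𝒢 : Finset (Finset (Fin n)) := (ℱ.filter (fun F => B ⊆ F)).image (· \ B) with h𝒢
    have hrec : ∀ F ∈ ℱ.filter (fun F => B ⊆ F), (F \ B) ∪ B = F := by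
      intro F hF
      exact Finset.sdiff_union_of_subset (Finset.mem_filter.1 hF).2
    have hinj : Set.InjOn (· \ B) (ℱ.filter (fun F => B ⊆ F)) := by
      intro E hE F hF h
      rw [← hrec E hE, ← hrec F hF]
      simp only at h
      rw [h]
    have hcard𝒢 : 𝒢.card = (ℱ.filter (fun F => B ⊆ F)).card :=
      Finset.card_image_of_injOn hinj
    -- unpack membership in 𝒢
    have hmem𝒢 : ∀ E ∈ 𝒢, ∃ F ∈ ℱ, B ⊆ F ∧ E = F \ B := by
      intro E hE
      obtain ⟨F, hF, rfl⟩ := Finset.mem_image.1 hE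
      obtain ⟨hF1, hF2⟩ := Finset.mem_filter.1 hF
      exact ⟨F, hF1, hF2, rfl⟩
    set M : Finset ℕ := 𝒢.offDiag.image (fun p => (p.1 ∩ p.2).card) with hMdef
    have hk' : ∀ E ∈ 𝒢, E.card = k - (ℓ₁ + 1) := by
      intro E hE
      obtain ⟨F, hF, hBF, rfl⟩ := hmem𝒢 E hE
      rw [Finset.card_sdiff_of_subset hBF, huniform F hF, hBcard]
    have hMlt : ∀ m ∈ M, m < k - (ℓ₁ + 1) := by
      intro m hm
      obtain ⟨p, hp, rfl⟩ := Finset.mem_image.1 hm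
      obtain ⟨hp1, hp2, hp12⟩ := Finset.mem_offDiag.1 hp
      have h1 : p.1 ∩ p.2 ⊆ p.1 := Finset.inter_subset_left
      have h2 : (p.1 ∩ p.2).card ≤ k - (ℓ₁ + 1) := by
        rw [← hk' p.1 hp1]; exact Finset.card_le_card h1
      rcases lt_or_eq_of_le h2 with h | h
      · exact h
      · exfalso
        have he1 : p.1 ∩ p.2 = p.1 :=
          Finset.eq_of_subset_of_card_le h1 (by rw [hk' p.1 hp1, h])
        have hsub12 : p.1 ⊆ p.2 := by rw [← he1]; exact Finset.inter_subset_right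
        exact hp12 (Finset.eq_of_subset_of_card_le hsub12
          (by rw [hk' p.1 hp1, hk' p.2 hp2]))
    have hMs : M.card ≤ s - 1 := by
      have himg : M.image (· + (ℓ₁ + 1)) ⊆ L.erase ℓ₁ := by
        intro x hx
        obtain ⟨m, hm, rfl⟩ := Finset.mem_image.1 hx
        obtain ⟨p, hp, rfl⟩ := Finset.mem_image.1 hm
        obtain ⟨hp1, hp2, hp12⟩ := Finset.mem_offDiag.1 hp
        obtain ⟨E, hE, hBE, hEeq⟩ := hmem𝒢 p.1 hp1
        obtain ⟨F, hF, hBF, hFeq⟩ := hmem𝒢 p.2 hp2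
        have hEF : E ≠ F := by
          intro h; apply hp12; rw [hEeq, hFeq, h]
        have hLEF : (E ∩ F).card ∈ L := hL E hE F hF hEF
        have hBEF : B ⊆ E ∩ F := Finset.subset_inter hBE hBF
        have hkey : (p.1 ∩ p.2).card + (ℓ₁ + 1) = (E ∩ F).card := by
          have : p.1 ∩ p.2 = (E ∩ F) \ B := by
            rw [hEeq, hFeq]
            ext x
            simp only [Finset.mem_inter, Finset.mem_sdiff]
            tauto
          rw [this, Finset.card_sdiff_of_subset hBEF, hBcard]
          have := Finset.card_le_card hBEF
          rw [hBcard] at this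
          omega
        rw [hkey]
        refine Finset.mem_erase.2 ⟨?_, hLEF⟩
        intro h
        rw [← hkey] at h
        omega
      have h1 : (M.image (· + (ℓ₁ + 1))).card = M.card :=
        Finset.card_image_of_injective _ (add_left_injective _)
      have h2 : (L.erase ℓ₁).card = s - 1 := by
        rw [Finset.card_erase_of_mem hℓ₁, hLcard]
      calc M.card = (M.image (· + (ℓ₁ + 1))).card := h1.symm
        _ ≤ (L.erase ℓ₁).card := Finset.card_le_card himg
        _ = s - 1 := h2
    have hsubU : ∀ E ∈ 𝒢, E ⊆ Finset.univ \ B := by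
      intro E hE
      obtain ⟨F, hF, hBF, rfl⟩ := hmem𝒢 E hE
      intro x hx
      obtain ⟨hx1, hx2⟩ := Finset.mem_sdiff.1 hx
      exact Finset.mem_sdiff.2 ⟨Finset.mem_univ x, hx2⟩
    have hMint : ∀ E ∈ 𝒢, ∀ F ∈ 𝒢, E ≠ F → (E ∩ F).card ∈ M := by
      intro E hE F hF hEF
      exact Finset.mem_image.2 ⟨(E, F), Finset.mem_offDiag.2 ⟨hE, hF, hEF⟩, rfl⟩
    have hmain := aux_card_le_choose (Finset.univ \ B) 𝒢 (k - (ℓ₁ + 1))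
      hsubU hk' M hMint hMlt
    have hUcard : (Finset.univ \ B : Finset (Fin n)).card = n - (ℓ₁ + 1) := by
      rw [Finset.card_sdiff_of_subset (Finset.subset_univ B), hBcard, Finset.card_univ,
        Fintype.card_fin]
    rw [hUcard] at hmain
    rw [← hcard𝒢]
    calc 𝒢.card ≤ (n - ℓ₁ - 1).choose M.card := by
          have hnn : n - (ℓ₁ + 1) = n - ℓ₁ - 1 := by omega
          rwa [hnn] at hmain
      _ ≤ (n - ℓ₁ - 1).choose (s - 1) :=
          aux_choose_mono_left _ _ _ hMs (by omega)
  -- put everything together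
  have hsum : ℱ.card ≤ (W.powersetCard (ℓ₁ + 1)).card * ((n - ℓ₁ - 1).choose (s - 1)) := by
    calc ℱ.card ≤ ((W.powersetCard (ℓ₁ + 1)).biUnion
          (fun B => ℱ.filter (fun F => B ⊆ F))).card := Finset.card_le_card hcover
      _ ≤ ∑ B ∈ W.powersetCard (ℓ₁ + 1), (ℱ.filter (fun F => B ⊆ F)).card :=
          Finset.card_biUnion_le
      _ ≤ ∑ _B ∈ W.powersetCard (ℓ₁ + 1), (n - ℓ₁ - 1).choose (s - 1) :=
          Finset.sum_le_sum hblock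
      _ = (W.powersetCard (ℓ₁ + 1)).card * ((n - ℓ₁ - 1).choose (s - 1)) := by
          rw [Finset.sum_const, smul_eq_mul]
  have hpc : (W.powersetCard (ℓ₁ + 1)).card ≤ (k ^ 2).choose (ℓ₁ + 1) := by
    rw [Finset.card_powersetCard]
    exact Nat.choose_le_choose _ hWcard
  have e1 : (n - ℓ₁) * ((n - ℓ₁ - 1).choose (s - 1)) = (n - ℓ₁).choose s * s := by
    have h1 : n - ℓ₁ - 1 + 1 = n - ℓ₁ := by omega
    have h2 : s - 1 + 1 = s := by omega
    have h3 := Nat.add_one_mul_choose_eq (n - ℓ₁ - 1) (s - 1)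
    rw [h1, h2] at h3
    exact h3
  have hfinal : ℱ.card * s ≤ (n - ℓ₁).choose s * s := by
    calc ℱ.card * s
        ≤ ((W.powersetCard (ℓ₁ + 1)).card * ((n - ℓ₁ - 1).choose (s - 1))) * s :=
          Nat.mul_le_mul_right s hsum
      _ = ((W.powersetCard (ℓ₁ + 1)).card * s) * ((n - ℓ₁ - 1).choose (s - 1)) := by ring
      _ ≤ ((k ^ 2).choose (ℓ₁ + 1) * s) * ((n - ℓ₁ - 1).choose (s - 1)) :=
          Nat.mul_le_mul_right _ (Nat.mul_le_mul_right s hpc)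
      _ ≤ (n - ℓ₁) * ((n - ℓ₁ - 1).choose (s - 1)) :=
          Nat.mul_le_mul_right _ (by omega)
      _ = (n - ℓ₁).choose s * s := e1
  exact Nat.le_of_mul_le_mul_right hfinal hs
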